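/- arXiv:math/0206116 — 2 statements merged into one kernel-verified Lean document; each statement's English description precedes it below -/
import Mathlib

section
/- Let R be a commutative ring, J an ideal of R such that the quotient ring R/J is Artinian, and M an R-module with J • M = 0. Then: (a) the set S of maximal ideals of R containing J is finite; (b) for every maximal ideal 𝔪 of R not containing J, the localization M_𝔪 of M at 𝔪 is zero; and (c) the canonical map M → ∏_{𝔪 ∈ S} M_𝔪, given in each coordinate by the localization map, is bijective. -/
section AuxKilledModule

variable {R : Type*} [CommRing R]

/-- (a) finiteness of maximal ideals containing `J`. -/
lemma aux_finite_max (J : Ideal R) (hArt : IsArtinianRing (R ⧸ J)) :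
    {𝔪 : Ideal R | 𝔪.IsMaximal ∧ J ≤ 𝔪}.Finite := by
  haveI := hArt
  apply Set.Finite.of_finite_image
    (f := fun 𝔪 => Ideal.map (Ideal.Quotient.mk J) 𝔪)
  · apply (IsArtinianRing.setOfPred_isPrime_finite (R ⧸ J)).subset
    rintro _ ⟨𝔪, ⟨hmax, hle⟩, rfl⟩
    haveI := hmax.isPrime
    exact Ideal.map_isPrime_of_surjective Ideal.Quotient.mk_surjective
      (by rwa [Ideal.mk_ker])
  · rintro 𝔪 ⟨h1, h1'⟩ 𝔪' ⟨h2, h2'⟩ heq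
    have key : ∀ (𝔫 : Ideal R), J ≤ 𝔫 →
        Ideal.comap (Ideal.Quotient.mk J) (Ideal.map (Ideal.Quotient.mk J) 𝔫) = 𝔫 := by
      intro 𝔫 h
      rw [Ideal.comap_map_of_surjective _ Ideal.Quotient.mk_surjective,
        ← RingHom.ker_eq_comap_bot, Ideal.mk_ker, sup_eq_left.2 h]
    rw [← key 𝔪 h1', ← key 𝔪' h2']
    exact congrArg _ heq

lemma aux_jac_pow (J : Ideal R) (hArt : IsArtinianRing (R ⧸ J)) :
    ∃ k : ℕ, (Ideal.jacobson J) ^ (k + 1) ≤ J := by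
  haveI := hArt
  obtain ⟨k, hk⟩ := IsArtinianRing.isNilpotent_jacobson_bot (R := R ⧸ J)
  refine ⟨k, fun x hx => ?_⟩
  have hmem : Ideal.Quotient.mk J x ∈
      (Ideal.map (Ideal.Quotient.mk J) (Ideal.jacobson J)) ^ (k + 1) := by
    rw [← Ideal.map_pow]; exact Ideal.mem_map_of_mem _ hx
  rw [Ideal.map_jacobson_of_surjective Ideal.Quotient.mk_surjective
      (le_of_eq Ideal.mk_ker), Ideal.map_quotient_self, pow_succ] at hmem
  have hb : (Ideal.jacobson (⊥ : Ideal (R ⧸ J))) ^ k * Ideal.jacobson ⊥ ≤ ⊥ := by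
    rw [hk]; simp
  have h0 := hb hmem
  rw [Ideal.mem_bot] at h0
  exact (Ideal.Quotient.eq_zero_iff_mem).mp h0

/-- (b) vanishing of localizations away from `J`. -/
lemma aux_vanish (J : Ideal R) (M : Type*) [AddCommGroup M] [Module R M]
    (hJM : ∀ r ∈ J, ∀ m : M, r • m = 0)
    (𝔪 : Ideal R) (h𝔪 : 𝔪.IsMaximal) (hn : ¬ J ≤ 𝔪) :
    haveI := h𝔪.isPrime
    ∀ x : LocalizedModule 𝔪.primeCompl M, x = 0 := by
  haveI := h𝔪.isPrime
  intro x
  induction x using LocalizedModule.induction_on with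
  | h m s =>
    obtain ⟨r, hrJ, hrm⟩ := SetLike.not_le_iff_exists.mp hn
    rw [← LocalizedModule.zero_mk s, LocalizedModule.mk_eq]
    refine ⟨⟨r, hrm⟩, ?_⟩
    show r • ((s : R) • m) = r • ((s : R) • (0 : M))
    rw [smul_zero, smul_zero, hJM r hrJ]

lemma aux_key (J : Ideal R)
    (M : Type*) [AddCommGroup M] [Module R M]
    (hfin : {𝔪 : Ideal R | 𝔪.IsMaximal ∧ J ≤ 𝔪}.Finite) (k1 : ℕ)
    (hann : ∀ r ∈ ∏ 𝔪 ∈ hfin.toFinset, 𝔪 ^ k1, ∀ m : M, r • m = 0)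
    (𝔪₀ : Ideal R) (h₀ : 𝔪₀.IsMaximal ∧ J ≤ 𝔪₀) :
    haveI := h₀.1.isPrime
    ∀ x : LocalizedModule 𝔪₀.primeCompl M, ∃ m : M,
      (LocalizedModule.mk m 1 : LocalizedModule 𝔪₀.primeCompl M) = x ∧
      ∀ (𝔪 : Ideal R) (h : 𝔪.IsMaximal ∧ J ≤ 𝔪), 𝔪 ≠ 𝔪₀ →
        haveI := h.1.isPrime
        (LocalizedModule.mk m 1 : LocalizedModule 𝔪.primeCompl M) = 0 := by
  haveI := h₀.1.isPrime
  intro x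
  induction x using LocalizedModule.induction_on with
  | h m₀ s =>
    classical
    have h₀mem : 𝔪₀ ∈ hfin.toFinset := hfin.mem_toFinset.mpr h₀
    set Q : Ideal R := ∏ 𝔪 ∈ hfin.toFinset.erase 𝔪₀, 𝔪 ^ k1 with hQdef
    have hQI : Q * 𝔪₀ ^ k1 = ∏ 𝔪 ∈ hfin.toFinset, 𝔪 ^ k1 :=
      Finset.prod_erase_mul _ _ h₀mem
    -- coprimality of Q and 𝔪₀ ^ k1
    have hcop : IsCoprime Q (𝔪₀ ^ k1) := by
      apply IsCoprime.prod_left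
      intro 𝔪 h𝔪
      obtain ⟨hne, hmem⟩ := Finset.mem_erase.mp h𝔪
      exact (Ideal.isCoprime_iff_sup_eq.mpr
        ((hfin.mem_toFinset.mp hmem).1.coprime_of_ne h₀.1 hne)).pow
    obtain ⟨e, heQ, f, hf, hef⟩ := Ideal.isCoprime_iff_exists.mp hcop
    -- inverse of s modulo 𝔪₀ ^ k1
    have hcops : IsCoprime (Ideal.span {(s : R)}) (𝔪₀ ^ k1) := by
      have h1 : IsCoprime (Ideal.span {(s : R)}) 𝔪₀ := by
        rw [Ideal.isCoprime_iff_exists]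
        obtain ⟨y, i, hi, hyi⟩ := h₀.1.exists_inv s.2
        exact ⟨y * (s : R), Ideal.mem_span_singleton'.mpr ⟨y, rfl⟩, i, hi, hyi⟩
      exact h1.pow_right
    obtain ⟨a, haS, d, hd, had⟩ := Ideal.isCoprime_iff_exists.mp hcops
    obtain ⟨c, hc⟩ := Ideal.mem_span_singleton'.mp haS
    rw [← hc] at had
    -- an element of Q not in 𝔪₀
    have hQnle : ¬ Q ≤ 𝔪₀ := by
      intro hle
      obtain ⟨𝔪, h𝔪, hle'⟩ := (Ideal.IsPrime.prod_le (hp := h₀.1.isPrime)).mp hle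
      obtain ⟨hne, hmem⟩ := Finset.mem_erase.mp h𝔪
      have hle2 : 𝔪 ≤ 𝔪₀ := Ideal.IsPrime.le_of_pow_le hle'
      exact hne ((hfin.mem_toFinset.mp hmem).1.eq_of_le h₀.1.ne_top hle2)
    obtain ⟨u, huQ, hu0⟩ := SetLike.not_le_iff_exists.mp hQnle
    refine ⟨(c * e) • m₀, ?_, ?_⟩
    · rw [LocalizedModule.mk_eq]
      refine ⟨⟨u, hu0⟩, ?_⟩
      show u • ((s : R) • ((c * e) • m₀)) = u • ((1 : R) • m₀)
      rw [one_smul, smul_smul, smul_smul]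
      have hmem1 : (s : R) * (c * e) - 1 ∈ 𝔪₀ ^ k1 := by
        have hrw : (s : R) * (c * e) - 1 = -(d * e) - f := by
          linear_combination e * had + hef
        rw [hrw]
        exact sub_mem (neg_mem (Ideal.mul_mem_right e _ hd)) hf
      have hdiff : (u * (s : R) * (c * e) - u) • m₀ = 0 := by
        apply hann
        rw [← hQI]
        have hrw2 : u * (s : R) * (c * e) - u = u * ((s : R) * (c * e) - 1) := by
          ring
        rw [hrw2]
        exact Ideal.mul_mem_mul huQ hmem1
      rw [sub_smul, sub_eq_zero] at hdiff
      exact hdiff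
    · intro 𝔪 h hne
      haveI := h.1.isPrime
      have hnle : ¬ 𝔪₀ ^ k1 ≤ 𝔪 := by
        intro hle
        exact hne ((h₀.1.eq_of_le h.1.ne_top (Ideal.IsPrime.le_of_pow_le hle)).symm)
      obtain ⟨t, htm, ht0⟩ := SetLike.not_le_iff_exists.mp hnle
      rw [← LocalizedModule.zero_mk (1 : 𝔪.primeCompl), LocalizedModule.mk_eq]
      refine ⟨⟨t, ht0⟩, ?_⟩
      show t • ((1 : R) • ((c * e) • m₀)) = t • ((1 : R) • (0 : M))
      rw [one_smul, one_smul, smul_zero, smul_smul]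
      apply hann
      rw [← hQI]
      have hrw3 : t * (c * e) = c * (e * t) := by ring
      rw [hrw3]
      exact Ideal.mul_mem_left _ c (Ideal.mul_mem_mul heQ htm)

end AuxKilledModule

/-- **Decomposition of a module killed by an ideal with Artinian quotient.**
Let `R` be a commutative ring, `J ⊆ R` an ideal with `R/J` Artinian, and `M` an
`R`-module with `J • M = 0`.  Then: (a) the set of maximal ideals of `R` containing `J`
is finite; (b) the localization of `M` at any maximal ideal not containing `J`
vanishes; and (c) the canonical map from `M` to the product of its localizations at the
maximal ideals containing `J` is bijective. -/
theorem module_killed_by_ideal_decomposition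
    {R : Type*} [CommRing R] (J : Ideal R) (hArt : IsArtinianRing (R ⧸ J))
    (M : Type*) [AddCommGroup M] [Module R M]
    (hJM : ∀ r ∈ J, ∀ m : M, r • m = 0) :
    {𝔪 : Ideal R | 𝔪.IsMaximal ∧ J ≤ 𝔪}.Finite ∧
    (∀ (𝔪 : Ideal R) (h𝔪 : 𝔪.IsMaximal), ¬ J ≤ 𝔪 →
      haveI := h𝔪.isPrime
      ∀ x : LocalizedModule 𝔪.primeCompl M, x = 0) ∧
    Function.Bijective
      (fun (m : M) (𝔪 : {𝔪 : Ideal R // 𝔪.IsMaximal ∧ J ≤ 𝔪}) =>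
        haveI := 𝔪.2.1.isPrime
        LocalizedModule.mkLinearMap 𝔪.1.primeCompl M m) := by
  classical
  have hfin := aux_finite_max J hArt
  obtain ⟨k, hjac⟩ := aux_jac_pow J hArt
  have hann : ∀ r ∈ ∏ 𝔪 ∈ hfin.toFinset, 𝔪 ^ (k + 1), ∀ m : M, r • m = 0 := by
    have hle : (∏ 𝔪 ∈ hfin.toFinset, 𝔪 ^ (k + 1)) ≤ J := by
      have h1 : (∏ 𝔪 ∈ hfin.toFinset, 𝔪) ≤ Ideal.jacobson J := by
        apply le_sInf
        rintro b ⟨hJb, hbmax⟩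
        exact le_trans Ideal.prod_le_inf
          (Finset.inf_le (hfin.mem_toFinset.mpr ⟨hbmax, hJb⟩))
      calc (∏ 𝔪 ∈ hfin.toFinset, 𝔪 ^ (k + 1))
          = (∏ 𝔪 ∈ hfin.toFinset, 𝔪) ^ (k + 1) := Finset.prod_pow _ _ _
        _ ≤ (Ideal.jacobson J) ^ (k + 1) := Ideal.pow_right_mono h1 _
        _ ≤ J := hjac
    exact fun r hr m => hJM r (hle hr) m
  refine ⟨hfin, fun 𝔪 h𝔪 hn => aux_vanish J M hJM 𝔪 h𝔪 hn, ?_, ?_⟩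
  · -- injectivity
    have hzero : ∀ m : M, (∀ 𝔪 : {𝔪 : Ideal R // 𝔪.IsMaximal ∧ J ≤ 𝔪},
        haveI := 𝔪.2.1.isPrime
        (LocalizedModule.mkLinearMap 𝔪.1.primeCompl M m) = 0) → m = 0 := by
      intro m hm
      let A : Ideal R :=
        { carrier := {r : R | r • m = 0}
          add_mem' := fun {a b} ha hb => by
            simp only [Set.mem_setOf_eq] at *
            rw [add_smul, ha, hb, add_zero]
          zero_mem' := by simp
          smul_mem' := fun c r hr => by
            simp only [Set.mem_setOf_eq, smul_eq_mul] at *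
            rw [mul_smul, hr, smul_zero] }
      have hA : A = ⊤ := by
        by_contra hne
        obtain ⟨𝔪, hmax, hle⟩ := Ideal.exists_le_maximal A hne
        by_cases hJ𝔪 : J ≤ 𝔪
        · haveI := hmax.isPrime
          have h0 := hm ⟨𝔪, hmax, hJ𝔪⟩
          rw [LocalizedModule.mkLinearMap_apply,
            ← LocalizedModule.zero_mk (1 : 𝔪.primeCompl), LocalizedModule.mk_eq] at h0
          obtain ⟨u, hu⟩ := h0
          have hu' : (u : R) • m = 0 := by
            have := hu
            simpa [Submonoid.smul_def] using this
          exact u.2 (hle hu')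
        · obtain ⟨r, hrJ, hr𝔪⟩ := SetLike.not_le_iff_exists.mp hJ𝔪
          exact hr𝔪 (hle (hJM r hrJ m))
      have h1 : (1 : R) ∈ A := hA ▸ Submodule.mem_top
      have h2 : (1 : R) • m = 0 := h1
      rwa [one_smul] at h2
    intro m₁ m₂ h
    have hsub : m₁ - m₂ = 0 := by
      apply hzero
      intro 𝔪
      haveI := 𝔪.2.1.isPrime
      rw [map_sub, sub_eq_zero]
      exact congrFun h 𝔪
    exact sub_eq_zero.mp hsub
  · -- surjectivity
    intro y
    haveI : Finite {𝔪 : Ideal R // 𝔪.IsMaximal ∧ J ≤ 𝔪} := hfin.to_subtype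
    haveI := Fintype.ofFinite {𝔪 : Ideal R // 𝔪.IsMaximal ∧ J ≤ 𝔪}
    choose g hg1 hg2 using fun σ : {𝔪 : Ideal R // 𝔪.IsMaximal ∧ J ≤ 𝔪} =>
      aux_key J M hfin (k + 1) hann σ.1 σ.2 (y σ)
    refine ⟨∑ σ, g σ, ?_⟩
    funext τ
    haveI := τ.2.1.isPrime
    show LocalizedModule.mkLinearMap τ.1.primeCompl M (∑ σ, g σ) = y τ
    rw [map_sum, Finset.sum_eq_single τ]
    · rw [LocalizedModule.mkLinearMap_apply]; exact hg1 τ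
    · intro σ _ hστ
      rw [LocalizedModule.mkLinearMap_apply]
      exact hg2 σ τ.1 τ.2 (fun hh => hστ (Subtype.ext hh.symm))
    · intro hτ; exact absurd (Finset.mem_univ τ) hτ
end

section
/- Let R be a commutative Artinian ring and 𝔪 a maximal ideal of R. Then there exists a natural number k with 𝔪^k = 𝔪^(k+1); and for any such k and any R-module M, the canonical localization map M → M_𝔪 is surjective with kernel equal to 𝔪^k • M. In particular the induced map M/(𝔪^k • M) → M_𝔪 is an isomorphism. -/
/-- **Localization at a maximal ideal of an Artinian ring.**
Let `R` be a commutative Artinian ring and `𝔪` a maximal ideal of `R`.  Then there is a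
natural number `k` with `𝔪^k = 𝔪^(k+1)`, and for any such `k` and any `R`-module `M`,
the canonical map `M → M_𝔪` is surjective with kernel `𝔪^k • M`; in particular the
induced map `M/(𝔪^k • M) → M_𝔪` is an isomorphism. -/
theorem localization_at_maximal_ideal_of_artinian
    {R : Type*} [CommRing R] [IsArtinianRing R] (𝔪 : Ideal R) [𝔪.IsMaximal]
    (M : Type*) [AddCommGroup M] [Module R M] :
    (∃ k : ℕ, 𝔪 ^ k = 𝔪 ^ (k + 1)) ∧
    ∀ k : ℕ, 𝔪 ^ k = 𝔪 ^ (k + 1) →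
      Function.Surjective (LocalizedModule.mkLinearMap 𝔪.primeCompl M) ∧
      LinearMap.ker (LocalizedModule.mkLinearMap 𝔪.primeCompl M)
        = 𝔪 ^ k • (⊤ : Submodule R M) ∧
      ∃ e : (M ⧸ (𝔪 ^ k • (⊤ : Submodule R M))) ≃ₗ[R] LocalizedModule 𝔪.primeCompl M,
        ∀ m : M, e (Submodule.Quotient.mk m) = LocalizedModule.mkLinearMap 𝔪.primeCompl M m := by
  constructor
  · obtain ⟨n, hn⟩ := IsArtinian.monotone_stabilizes (R := R) (M := R)
      ⟨fun n => OrderDual.toDual (𝔪 ^ n), fun a b hab => Ideal.pow_le_pow_right hab⟩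
    exact ⟨n, congrArg OrderDual.ofDual (hn (n + 1) (Nat.le_succ n))⟩
  intro k h
  have hk0 : k ≠ 0 := by
    rintro rfl
    exact (Ideal.IsMaximal.ne_top ‹𝔪.IsMaximal›) (by simpa using h.symm)
  -- 𝔪^k = 𝔪^(k+j)
  have hpow : ∀ j : ℕ, 𝔪 ^ k = 𝔪 ^ (k + j) := by
    intro j
    induction j with
    | zero => rfl
    | succ j ih =>
      rw [show k + (j + 1) = (k + j) + 1 by ring, pow_succ, ← ih, ← pow_succ, ← h]
  set L := Localization.AtPrime 𝔪 with hL
  -- every element of 𝔪^k is killed by some element outside 𝔪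
  have hann : ∀ a ∈ 𝔪 ^ k, ∃ u ∈ 𝔪.primeCompl, u * a = 0 := by
    intro a ha
    obtain ⟨n, hn⟩ := IsArtinianRing.isNilpotent_jacobson_bot (R := L)
    have ha' : a ∈ 𝔪 ^ n := by
      rcases le_or_gt n k with hnk | hnk
      · exact Ideal.pow_le_pow_right hnk ha
      · rw [hpow (n - k), show k + (n - k) = n by omega] at ha
        exact ha
    have h1 : algebraMap R L a ∈ (Ideal.map (algebraMap R L) 𝔪) ^ n := by
      rw [← Ideal.map_pow]
      exact Ideal.mem_map_of_mem _ ha'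
    rw [Localization.AtPrime.map_eq_maximalIdeal] at h1
    have h2 : algebraMap R L a ∈ (⊥ : Ideal L) := by
      have hle : (IsLocalRing.maximalIdeal (Localization 𝔪.primeCompl)) ^ n ≤ ⊥ := by
        rw [← Ideal.zero_eq_bot, ← hn]
        exact Ideal.pow_right_mono (IsLocalRing.maximalIdeal_le_jacobson ⊥) n
      exact hle h1
    have h3 : algebraMap R L a = algebraMap R L 0 := by
      rw [map_zero]
      simpa using h2
    obtain ⟨c, hc⟩ := (IsLocalization.eq_iff_exists 𝔪.primeCompl L).mp h3
    exact ⟨c, c.2, by simpa using hc⟩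
  -- inverses modulo 𝔪^k
  have hinv : ∀ u ∉ 𝔪, ∃ t : R, u * t - 1 ∈ 𝔪 ^ k := by
    intro u hu
    obtain ⟨v, i, hi, hvi⟩ := Ideal.IsMaximal.exists_inv ‹𝔪.IsMaximal› hu
    have hy : (1 - v * u) ∈ 𝔪 := by
      have : 1 - v * u = i := by linear_combination -hvi
      rwa [this]
    set y := 1 - v * u with hy_def
    refine ⟨v * (∑ i ∈ Finset.range k, y ^ i), ?_⟩
    have hg : (∑ i ∈ Finset.range k, y ^ i) * (y - 1) = y ^ k - 1 := geom_sum_mul y k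
    have : u * (v * (∑ i ∈ Finset.range k, y ^ i)) - 1 = -(y ^ k) := by
      linear_combination -hg
    rw [this]
    exact (𝔪 ^ k).neg_mem (Ideal.pow_mem_pow hy k)
  set f := LocalizedModule.mkLinearMap 𝔪.primeCompl M with hf
  -- surjectivity
  have hsurj : Function.Surjective f := by
    intro x
    induction x using LocalizedModule.induction_on with
    | h m s =>
      have hus : IsUnit (algebraMap R L (s : R)) := IsLocalization.map_units L s
      obtain ⟨c, hc⟩ := IsArtinianRing.localization_surjective 𝔪.primeCompl L
        (↑hus.unit⁻¹ : L)
      have h1 : algebraMap R L (c * (s : R)) = algebraMap R L 1 := by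
        rw [map_mul, hc, map_one]; exact hus.val_inv_mul
      obtain ⟨u, hu⟩ := (IsLocalization.eq_iff_exists 𝔪.primeCompl L).mp h1
      refine ⟨c • m, ?_⟩
      show LocalizedModule.mk (c • m) 1 = LocalizedModule.mk m s
      rw [LocalizedModule.mk_eq]
      refine ⟨u, ?_⟩
      simp only [Submonoid.smul_def, one_smul, smul_smul]
      congr 1
      have : (u : R) * (c * (s : R)) = (u : R) * 1 := hu
      linear_combination this
  -- kernel
  have hker : LinearMap.ker f = 𝔪 ^ k • (⊤ : Submodule R M) := by
    apply le_antisymm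
    · intro m hm
      have hmem : ∃ u : 𝔪.primeCompl, u • m = 0 := by
        have hm0 : LocalizedModule.mk m (1 : 𝔪.primeCompl) = LocalizedModule.mk 0 1 := by
          simpa [hf, LocalizedModule.zero_mk] using (LinearMap.mem_ker.mp hm)
        obtain ⟨u, hu⟩ := LocalizedModule.mk_eq.mp hm0
        exact ⟨u, by simpa using hu⟩
      obtain ⟨⟨u, huS⟩, hu⟩ := hmem
      simp only [Submonoid.smul_def] at hu
      obtain ⟨t, ht⟩ := hinv u huS
      have hmm : m = (-(u * t - 1)) • m + t • (u • m) := by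
        rw [smul_smul, ← add_smul, show -(u * t - 1) + t * u = 1 by ring, one_smul]
      rw [hmm, hu, smul_zero, add_zero]
      exact Submodule.smul_mem_smul ((𝔪 ^ k).neg_mem ht) Submodule.mem_top
    · intro m hm
      rw [LinearMap.mem_ker]
      refine Submodule.smul_induction_on hm ?_ ?_
      · intro a ha x _
        obtain ⟨u, huS, hua⟩ := hann a ha
        show LocalizedModule.mk (a • x) 1 = 0
        rw [← LocalizedModule.zero_mk (1 : 𝔪.primeCompl), LocalizedModule.mk_eq]
        refine ⟨⟨u, huS⟩, ?_⟩
        simp only [Submonoid.smul_def, one_smul, smul_zero, smul_smul]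
        rw [hua, zero_smul]
      · intro x y hx hy
        rw [map_add, hx, hy, add_zero]
  refine ⟨hsurj, hker, ?_⟩
  set N := 𝔪 ^ k • (⊤ : Submodule R M)
  have hNle : N ≤ LinearMap.ker f := le_of_eq hker.symm
  set g := Submodule.liftQ N f hNle with hg
  have hginj : Function.Injective g := by
    rw [← LinearMap.ker_eq_bot, Submodule.ker_liftQ_eq_bot N f hNle (le_of_eq hker)]
  have hgsurj : Function.Surjective g := by
    intro x
    obtain ⟨m, hm⟩ := hsurj x
    exact ⟨Submodule.Quotient.mk m, by simpa [g] using hm⟩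
  exact ⟨LinearEquiv.ofBijective g ⟨hginj, hgsurj⟩, fun m => rfl⟩
end
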